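/- Let X be a Banach space and X_d a Banach sequence space whose canonical unit vectors ε_n form a Schauder basis, and such that the dual basis ε_n* forms a Schauder basis of X_d*. If {y_n} ⊂ X* is an X_d-frame for X (i.e., A‖x‖ ≤ ‖{y_n(x)}‖_{X_d} ≤ B‖x‖ for all x ∈ X), then the analysis operator R̃ : X → X_d, R̃x = {y_n(x)}, is bounded and its adjoint R̃* : X_d* → X* satisfies R̃* b = Σ_n b_n y_n (the series converging in norm) for every b ∈ X_d*. -/
import Mathlib


/-- If {y_n} ⊂ X* is an X_d-frame for X, then the analysis operator
R̃ : X → X_d, R̃x = {y_n(x)}, is bounded and its (Banach) adjoint satisfies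
R̃* b = Σ_n b_n y_n (norm convergence) for every b ∈ X_d*.
The sequence space X_d is modelled as a Banach space W with an injective linear
"coordinate" map ι into sequences, whose canonical vectors e n form a Schauder basis
and whose coordinate functionals es n form a Schauder basis of the dual. -/
theorem stmt4 {X W : Type*} [NormedAddCommGroup X] [NormedSpace ℂ X] [CompleteSpace X]
    [NormedAddCommGroup W] [NormedSpace ℂ W] [CompleteSpace W]
    (ι : W →ₗ[ℂ] (ℕ → ℂ)) (hι : Function.Injective ι)
    (e : ℕ → W) (he : ∀ n, ι (e n) = fun j => if n = j then (1 : ℂ) else 0)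
    (hbasis : ∀ a : W, HasSum (fun n => ι a n • e n) a)
    (es : ℕ → (W →L[ℂ] ℂ)) (hes : ∀ n a, es n a = ι a n)
    (hdualbasis : ∀ b : W →L[ℂ] ℂ, HasSum (fun n => b (e n) • es n) b)
    (y : ℕ → (X →L[ℂ] ℂ))
    (R : X → W) (hR : ∀ (x : X) (n : ℕ), ι (R x) n = y n x)
    (A B : ℝ) (hA : 0 < A) (hB : 0 < B)
    (hframe : ∀ x : X, A * ‖x‖ ≤ ‖R x‖ ∧ ‖R x‖ ≤ B * ‖x‖) :
    ∃ Rc : X →L[ℂ] W, (∀ x, Rc x = R x) ∧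
      ∀ b : W →L[ℂ] ℂ, HasSum (fun n => b (e n) • y n) (b.comp Rc) := by

  -- R is linear
  have hadd : ∀ x z : X, R (x + z) = R x + R z := by
    intro x z
    apply hι
    ext n
    simp [hR, map_add]
  have hsmul : ∀ (c : ℂ) (x : X), R (c • x) = c • R x := by
    intro c x
    apply hι
    ext n
    simp [hR, map_smul]
  let Rlin : X →ₗ[ℂ] W :=
    { toFun := R, map_add' := hadd, map_smul' := hsmul }
  let Rc : X →L[ℂ] W := Rlin.mkContinuous B (fun x => (hframe x).2)
  refine ⟨Rc, fun x => rfl, ?_⟩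
  intro b
  have hcomp : ∀ n, (es n).comp Rc = y n := by
    intro n
    ext x
    simp [hes, hR, Rc, Rlin]
  have T : (W →L[ℂ] ℂ) →L[ℂ] (X →L[ℂ] ℂ) :=
    (ContinuousLinearMap.compL ℂ X W ℂ).flip Rc
  have hT := (hdualbasis b).mapL ((ContinuousLinearMap.compL ℂ X W ℂ).flip Rc)
  simpa [hcomp] using hT
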